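/- Let d ∈ ℕ, δ ∈ (0, 1/2], p ∈ (0, 1], and a ∈ {0, e₁, …, e_d}, and let D(δ, p, a) be the distribution on Z under which x has i.i.d. Bernoulli(p) coordinates, y = +1 with probability 1/2+δ and y = −1 with probability 1/2−δ, and α = a, all independent. Then the population loss F(w) = E_{z∼D(δ,p,a)}[f_A(w;z)] satisfies: F(w) = 2δ·E_x[‖(w−a)⊙x‖]; F is convex in w; F(a) = 0 and F(w) ≥ 0 for all w; F(w) ≥ 2δp‖w−a‖ for all w, so a is the unique minimizer of F; and every w with F(w) ≤ ε satisfies ‖w − a‖ ≤ ε/(2δp). -/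

import Mathlib

open scoped RealInnerProductSpace

/-- Instance space `Z = {0,1}^d × {−1,1} × {0, e₁, …, e_d}`: the boolean vector encodes `x`,
the boolean encodes `y` (`true ↦ +1`, `false ↦ −1`), and `Option (Fin d)` encodes `α`
(`none ↦ 0`, `some j ↦ e_j`). -/
abbrev ZA (d : ℕ) := (Fin d → Bool) × Bool × Option (Fin d)

/-- The vector `0` (for `none`) or the standard basis vector `e_j` (for `some j`). -/
noncomputable def stdVec (d : ℕ) (a : Option (Fin d)) : EuclideanSpace ℝ (Fin d) :=
  (WithLp.equiv 2 (Fin d → ℝ)).symm (fun j => if a = some j then 1 else 0)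

/-- Coordinatewise (Hadamard) product of a vector with a boolean mask `x ∈ {0,1}^d`. -/
noncomputable def hadamard {d : ℕ} (v : EuclideanSpace ℝ (Fin d)) (x : Fin d → Bool) :
    EuclideanSpace ℝ (Fin d) :=
  (WithLp.equiv 2 (Fin d → ℝ)).symm (fun j => v j * (if x j then 1 else 0))

/-- The loss `f_A(w; (x,y,α)) = y‖(w−α)⊙x‖`. -/
noncomputable def fA (d : ℕ) (w : EuclideanSpace ℝ (Fin d)) (z : ZA d) : ℝ :=
  (if z.2.1 then (1 : ℝ) else -1) * ‖hadamard (w - stdVec d z.2.2) z.1‖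

/-- Probability mass function of the distribution `D(δ, p, a)`: coordinates of `x` are
i.i.d. Bernoulli(p), `y = +1` w.p. `1/2+δ` and `y = −1` w.p. `1/2−δ`, and `α = a`. -/
noncomputable def massA (d : ℕ) (δ p : ℝ) (a : Option (Fin d)) (z : ZA d) : ℝ :=
  (∏ j, if z.1 j then p else 1 - p) *
    ((if z.2.1 then 1 / 2 + δ else 1 / 2 - δ) * (if z.2.2 = a then 1 else 0))

/-- Population loss `F(w) = E_{z ∼ D(δ,p,a)}[f_A(w;z)]`, written as a finite sum. -/
noncomputable def popLossA (d : ℕ) (δ p : ℝ) (a : Option (Fin d))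
    (w : EuclideanSpace ℝ (Fin d)) : ℝ :=
  ∑ z : ZA d, massA d δ p a z * fA d w z


section aux

variable {d : ℕ}

lemma hadamard_apply (v : EuclideanSpace ℝ (Fin d)) (x : Fin d → Bool) (j : Fin d) :
    hadamard v x j = v j * (if x j then 1 else 0) := rfl

lemma hadamard_zero (x : Fin d → Bool) : hadamard (0 : EuclideanSpace ℝ (Fin d)) x = 0 := by
  ext j; simp [hadamard_apply]

lemma hadamard_comb (c c' : ℝ) (u v : EuclideanSpace ℝ (Fin d)) (x : Fin d → Bool) :
    hadamard (c • u + c' • v) x = c • hadamard u x + c' • hadamard v x := by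
  ext j
  show (c * u j + c' * v j) * (if x j then 1 else 0)
      = c * (u j * (if x j then 1 else 0)) + c' * (v j * (if x j then 1 else 0))
  ring

/-- Reduction of the population loss to the `x`-expectation. -/
lemma popLossA_eq (δ p : ℝ) (a : Option (Fin d)) (w : EuclideanSpace ℝ (Fin d)) :
    popLossA d δ p a w =
      2 * δ * ∑ x : Fin d → Bool,
        (∏ j, if x j then p else 1 - p) * ‖hadamard (w - stdVec d a) x‖ := by
  unfold popLossA massA fA
  rw [Fintype.sum_prod_type, Finset.mul_sum]
  refine Finset.sum_congr rfl fun x _ => ?_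
  rw [Fintype.sum_prod_type, Fintype.sum_bool]
  have key : ∀ (c s : ℝ),
      (∑ α : Option (Fin d), (∏ j, if x j then p else 1 - p) * (c * (if α = a then 1 else 0)) *
        (s * ‖hadamard (w - stdVec d α) x‖))
      = (∏ j, if x j then p else 1 - p) * c * s * ‖hadamard (w - stdVec d a) x‖ := by
    intro c s
    rw [Finset.sum_eq_single a]
    · simp; ring
    · intro b _ hb; simp [hb]
    · simp
  simp only [Bool.false_eq_true, eq_self_iff_true, if_true, if_false]
  rw [key (1/2 + δ) 1, key (1/2 - δ) (-1)]
  ring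

lemma pi_nonneg (hp : p ∈ Set.Ioc (0:ℝ) 1) (x : Fin d → Bool) :
    0 ≤ ∏ j, if x j then p else 1 - p := by
  refine Finset.prod_nonneg fun j _ => ?_
  split <;> [exact le_of_lt hp.1; linarith [hp.2]]

/-- marginal: each coordinate is `1` with probability `p`. -/
lemma marginal (hp : p ∈ Set.Ioc (0:ℝ) 1) (j : Fin d) :
    ∑ x : Fin d → Bool, (∏ k, if x k then p else 1 - p) * (if x j then (1:ℝ) else 0) = p := by
  have hrw : ∀ x : Fin d → Bool,
      (∏ k, if x k then p else 1 - p) * (if x j then (1:ℝ) else 0)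
      = ∏ k, (fun k (b : Bool) => (if b then p else 1 - p) * (if k = j then (if b then (1:ℝ) else 0) else 1)) k (x k) := by
    intro x
    rw [Finset.prod_mul_distrib]
    congr 1
    rw [Finset.prod_ite_eq' Finset.univ j (fun k => if x k then (1:ℝ) else 0)]
    simp
  calc (∑ x : Fin d → Bool, (∏ k, if x k then p else 1 - p) * (if x j then (1:ℝ) else 0))
      = ∑ x : Fin d → Bool, ∏ k, (fun k (b : Bool) => (if b then p else 1 - p) * (if k = j then (if b then (1:ℝ) else 0) else 1)) k (x k) := by
        exact Finset.sum_congr rfl fun x _ => hrw x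
    _ = ∏ k, ∑ b : Bool, (if b then p else 1 - p) * (if k = j then (if b then (1:ℝ) else 0) else 1) := by
        rw [Fintype.prod_sum]
    _ = ∏ k, if k = j then p else (1:ℝ) := by
        refine Finset.prod_congr rfl fun k _ => ?_
        by_cases h : k = j <;> simp [h] <;> ring
    _ = p := by simp

/-- The key lower bound `p ‖v‖ ≤ E_x ‖v ⊙ x‖`. -/
lemma key_lb (hp : p ∈ Set.Ioc (0:ℝ) 1) (v : EuclideanSpace ℝ (Fin d)) :
    p * ‖v‖ ≤ ∑ x : Fin d → Bool, (∏ k, if x k then p else 1 - p) * ‖hadamard v x‖ := by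
  rcases eq_or_ne v 0 with rfl | hv
  · simp [hadamard_zero]
  have hv' : (0:ℝ) < ‖v‖ := norm_pos_iff.2 hv
  rw [← mul_le_mul_iff_of_pos_right hv']
  have step1 : p * ‖v‖ * ‖v‖ = ∑ j, (v j * v j) * p := by
    have : ⟪v, v⟫ = ‖v‖ * ‖v‖ := real_inner_self_eq_norm_mul_norm v
    have h2 : ⟪v, v⟫ = ∑ j, v j * v j := by
      rw [PiLp.inner_apply]; simp [RCLike.inner_apply, sq]
    rw [← Finset.sum_mul]
    rw [← h2, this]; ring
  rw [step1]
  have step2 : ∀ j, (v j * v j) * p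
      = ∑ x : Fin d → Bool, (∏ k, if x k then p else 1 - p) * ((v j * (if x j then 1 else 0)) * v j) := by
    intro j
    have := marginal (d := d) hp j
    calc (v j * v j) * p = (v j * v j) * ∑ x : Fin d → Bool, (∏ k, if x k then p else 1 - p) * (if x j then (1:ℝ) else 0) := by rw [this]
      _ = _ := by
          rw [Finset.mul_sum]
          refine Finset.sum_congr rfl fun x _ => ?_
          ring
  calc (∑ j, (v j * v j) * p)
      = ∑ j, ∑ x : Fin d → Bool, (∏ k, if x k then p else 1 - p) * ((v j * (if x j then 1 else 0)) * v j) := by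
        exact Finset.sum_congr rfl fun j _ => step2 j
    _ = ∑ x : Fin d → Bool, (∏ k, if x k then p else 1 - p) * ⟪hadamard v x, v⟫ := by
        rw [Finset.sum_comm]
        refine Finset.sum_congr rfl fun x _ => ?_
        have hin : (⟪hadamard v x, v⟫ : ℝ) = ∑ j, (v j * (if x j then (1:ℝ) else 0)) * v j := by
          rw [PiLp.inner_apply]
          exact Finset.sum_congr rfl fun j _ => by simp [RCLike.inner_apply, hadamard_apply]
        rw [hin, Finset.mul_sum]
    _ ≤ ∑ x : Fin d → Bool, (∏ k, if x k then p else 1 - p) * (‖hadamard v x‖ * ‖v‖) := by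
        refine Finset.sum_le_sum fun x _ => ?_
        exact mul_le_mul_of_nonneg_left (real_inner_le_norm _ _) (pi_nonneg hp x)
    _ = (∑ x : Fin d → Bool, (∏ k, if x k then p else 1 - p) * ‖hadamard v x‖) * ‖v‖ := by
        rw [Finset.sum_mul]
        exact Finset.sum_congr rfl fun x _ => by ring

lemma convex_term (c : ℝ) (hc : 0 ≤ c) (s : EuclideanSpace ℝ (Fin d)) (x : Fin d → Bool) :
    ConvexOn ℝ Set.univ (fun w : EuclideanSpace ℝ (Fin d) => c * ‖hadamard (w - s) x‖) := by
  refine ⟨convex_univ, fun w1 _ w2 _ t1 t2 ht1 ht2 hsum => ?_⟩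
  have hrw : t1 • w1 + t2 • w2 - s = t1 • (w1 - s) + t2 • (w2 - s) := by
    rw [smul_sub, smul_sub]
    rw [show t1 • w1 - t1 • s + (t2 • w2 - t2 • s) = t1 • w1 + t2 • w2 - (t1 • s + t2 • s) by abel,
      ← add_smul, hsum, one_smul]
  simp only
  rw [hrw, hadamard_comb]
  calc c * ‖t1 • hadamard (w1 - s) x + t2 • hadamard (w2 - s) x‖
      ≤ c * (‖t1 • hadamard (w1 - s) x‖ + ‖t2 • hadamard (w2 - s) x‖) :=
        mul_le_mul_of_nonneg_left (norm_add_le _ _) hc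
    _ = t1 * (c * ‖hadamard (w1 - s) x‖) + t2 * (c * ‖hadamard (w2 - s) x‖) := by
        rw [norm_smul, norm_smul, Real.norm_of_nonneg ht1, Real.norm_of_nonneg ht2]
        ring
    _ = t1 • (c * ‖hadamard (w1 - s) x‖) + t2 • (c * ‖hadamard (w2 - s) x‖) := rfl

lemma convexOn_finset_sum {ι : Type*} (t : Finset ι) (f : ι → EuclideanSpace ℝ (Fin d) → ℝ)
    (h : ∀ i ∈ t, ConvexOn ℝ Set.univ (f i)) :
    ConvexOn ℝ Set.univ (fun w => ∑ i ∈ t, f i w) := by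
  classical
  induction t using Finset.cons_induction with
  | empty => simpa using convexOn_const (0:ℝ) convex_univ
  | cons i t hi ih =>
    simp only [Finset.sum_cons]
    exact (h i (Finset.mem_cons_self _ _)).add
      (ih fun j hj => h j (Finset.mem_cons.2 (Or.inr hj)))

end aux

theorem statement16 (d : ℕ) (δ p : ℝ)
    (hδ : δ ∈ Set.Ioc (0 : ℝ) (1/2)) (hp : p ∈ Set.Ioc (0 : ℝ) 1)
    (a : Option (Fin d)) :
    (∀ w, popLossA d δ p a w =
        2 * δ * ∑ x : Fin d → Bool,
          (∏ j, if x j then p else 1 - p) * ‖hadamard (w - stdVec d a) x‖) ∧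
    ConvexOn ℝ Set.univ (popLossA d δ p a) ∧
    popLossA d δ p a (stdVec d a) = 0 ∧
    (∀ w, 0 ≤ popLossA d δ p a w) ∧
    (∀ w, 2 * δ * p * ‖w - stdVec d a‖ ≤ popLossA d δ p a w) ∧
    (∀ w, w ≠ stdVec d a → popLossA d δ p a (stdVec d a) < popLossA d δ p a w) ∧
    (∀ (ε : ℝ) (w : EuclideanSpace ℝ (Fin d)),
        popLossA d δ p a w ≤ ε → ‖w - stdVec d a‖ ≤ ε / (2 * δ * p)) := by
  have hδ0 : 0 < δ := hδ.1
  have heq := fun w => popLossA_eq (d := d) δ p a w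
  have hlb : ∀ w, 2 * δ * p * ‖w - stdVec d a‖ ≤ popLossA d δ p a w := by
    intro w
    rw [heq w]
    have := key_lb (d := d) hp (w - stdVec d a)
    calc 2 * δ * p * ‖w - stdVec d a‖ = 2 * δ * (p * ‖w - stdVec d a‖) := by ring
      _ ≤ _ := by
        apply mul_le_mul_of_nonneg_left this
        linarith
  have hmin : popLossA d δ p a (stdVec d a) = 0 := by
    rw [heq]
    simp [hadamard_zero]
  refine ⟨heq, ?_, hmin, ?_, hlb, ?_, ?_⟩
  · -- convexity
    have : popLossA d δ p a = fun w =>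
        ∑ x : Fin d → Bool,
          (2 * δ * (∏ j, if x j then p else 1 - p)) * ‖hadamard (w - stdVec d a) x‖ := by
      funext w
      rw [heq w, Finset.mul_sum]
      exact Finset.sum_congr rfl fun x _ => by ring
    rw [this]
    refine convexOn_finset_sum Finset.univ _ fun x _ => ?_
    refine convex_term _ ?_ _ _
    exact mul_nonneg (by positivity) (pi_nonneg hp x)
  · intro w
    have := hlb w
    have hp0 := hp.1
    have h0 : 0 ≤ 2 * δ * p * ‖w - stdVec d a‖ := by positivity
    linarith
  · intro w hw
    rw [hmin]
    have := hlb w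
    have h0 : 0 < 2 * δ * p * ‖w - stdVec d a‖ := by
      have : 0 < ‖w - stdVec d a‖ := by
        rw [norm_pos_iff, sub_ne_zero]; exact hw
      exact mul_pos (by have := hp.1; positivity) this
    linarith
  · intro ε w hε
    have h := hlb w
    have h2 : 0 < 2 * δ * p := by have := hp.1; positivity
    rw [le_div_iff₀ h2]
    calc ‖w - stdVec d a‖ * (2 * δ * p) = 2 * δ * p * ‖w - stdVec d a‖ := by ring
      _ ≤ popLossA d δ p a w := h
      _ ≤ ε := hε
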